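/- The Dynkin map is idempotent: γ(γ(p)) = γ(p) for every p ∈ T. -/

import Mathlib

noncomputable section

open scoped BigOperators

variable (K : Type) [Field K] [CharZero K]

/-- The free associative algebra `T = K⟨x,y⟩`, realized as the monoid algebra of the
free monoid on two generators. -/
abbrev T := MonoidAlgebra K (FreeMonoid (Fin 2))

/-- The word `v₁⋯vₙ` (a list of letters) as an element of `T`. -/
def word (l : List (Fin 2)) : T K := MonoidAlgebra.single (FreeMonoid.ofList l) 1

/-- The generator `x`. -/
def X : T K := word K [0]

/-- The generator `y`. -/
def Y : T K := word K [1]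

/-- Right-nested bracket `[v₁,[v₂,…,[vₙ₋₁,vₙ]…]]` of a word. -/
def brList : List (Fin 2) → T K
  | [] => 0
  | [v] => word K [v]
  | v :: rest => word K [v] * brList rest - brList rest * word K [v]

/-- The Dynkin map `γ : T → T`, sending a word `v₁⋯vₙ` to
`(1/n)[v₁,[v₂,…,[vₙ₋₁,vₙ]…]]` (and `1 ↦ 0`). -/
def dynkin : T K →ₗ[K] T K :=
  Finsupp.linearCombination K (fun w : FreeMonoid (Fin 2) =>
    ((w.toList.length : K)⁻¹) • brList K w.toList) ∘ₗ (MonoidAlgebra.coeffLinearEquiv K).toLinearMap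

attribute [local instance] LieRing.ofAssociativeRing

/-- The free Lie algebra `L` on `x, y`, as the Lie subalgebra of `T` generated by `x` and `y`. -/
def L : LieSubalgebra K (T K) := LieSubalgebra.lieSpan K (T K) {X K, Y K}

/-- The degree-`n` homogeneous component `T_n` of `T`, spanned by the words of length `n`. -/
def homog (n : ℕ) : Submodule K (T K) :=
  Submodule.span K { t | ∃ l : List (Fin 2), l.length = n ∧ t = word K l }

/-- The value `σ(i)` of a permutation of `{0,…,n-1}` on a natural number (junk value `0`
outside the range). -/
def permVal {n : ℕ} (σ : Equiv.Perm (Fin n)) (i : ℕ) : ℕ :=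
  if h : i < n then (σ ⟨i, h⟩ : ℕ) else 0

/-- The (0-indexed) descent set of a permutation: positions `i ∈ {0,…,n-2}` with
`σ(i) > σ(i+1)`. -/
def descSet {n : ℕ} (σ : Equiv.Perm (Fin n)) : Finset ℕ :=
  (Finset.range (n - 1)).filter fun i => permVal σ (i + 1) < permVal σ i

/-- The number of descents of a permutation. -/
def descNum {n : ℕ} (σ : Equiv.Perm (Fin n)) : ℕ := (descSet σ).card

/-- `DSet n k` is the set of permutations of `{0,…,n-1}` whose descent set is exactly
the first `k` positions (this is `D_{1..k}` of the paper, in 0-indexed form). -/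
def DSet (n k : ℕ) : Finset (Equiv.Perm (Fin n)) :=
  Finset.univ.filter fun σ => descSet σ = Finset.range k

/-- The Eulerian coefficient `c_σ = (-1)^{d(σ)} (binom (n-1) (d σ))⁻¹`. -/
def eulCoeff {n : ℕ} (σ : Equiv.Perm (Fin n)) : K :=
  (-1 : K) ^ descNum σ * ((Nat.choose (n - 1) (descNum σ) : K))⁻¹

/-- The degree-`n` Eulerian idempotent applied to the word `w₁⋯wₙ` given by
`v : Fin n → Fin 2`: `eₙ(w) = Σ_σ c_σ w^σ`. -/
def eul (n : ℕ) (v : Fin n → Fin 2) : T K :=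
  ∑ σ : Equiv.Perm (Fin n), eulCoeff K σ • word K (List.ofFn fun i => v (σ i))

/-- The `a`-part of an element of `T`: the linear map sending a word `a·w ↦ w` and
any word not starting with the letter `a` (or the empty word) to `0`.  For `p` with zero
constant term, `p = x·(letterPart 0 p) + y·(letterPart 1 p)`. -/
def letterPart (a : Fin 2) : T K →ₗ[K] T K :=
  Finsupp.linearCombination K (fun w : FreeMonoid (Fin 2) =>
    match w.toList with
    | [] => 0
    | b :: rest => if b = a then word K rest else 0)
    ∘ₗ (MonoidAlgebra.coeffLinearEquiv K).toLinearMap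

/-- The algebra endomorphism `s : T → T` with `s(x) = -y`, `s(y) = -x`. -/
def sMap : T K →ₐ[K] T K :=
  MonoidAlgebra.lift K (T K) (FreeMonoid (Fin 2))
    (FreeMonoid.lift fun a : Fin 2 => if a = 0 then -(Y K) else -(X K))



/-! ### Auxiliary development for the Dynkin idempotency -/

/-- `δ : T → T`, the unnormalized Dynkin map: a word maps to its right-nested bracket. -/
def delta : T K →ₗ[K] T K :=
  Finsupp.linearCombination K (fun w : FreeMonoid (Fin 2) => brList K w.toList)
    ∘ₗ (MonoidAlgebra.coeffLinearEquiv K).toLinearMap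

/-- The algebra map `ρ : T → End(T)` sending each letter `a` to `ad (word [a])`. -/
def rho : T K →ₐ[K] Module.End K (T K) :=
  MonoidAlgebra.lift K (Module.End K (T K)) (FreeMonoid (Fin 2))
    (FreeMonoid.lift fun a : Fin 2 => LieAlgebra.ad K (T K) (word K [a]))

lemma word_nil : word K ([] : List (Fin 2)) = 1 := rfl

lemma single_eq_smul_word (w : FreeMonoid (Fin 2)) (c : K) :
    (MonoidAlgebra.single w c : T K) = c • word K w.toList := by
  rw [word, FreeMonoid.ofList_toList]
  rw [MonoidAlgebra.smul_single', mul_one]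

lemma word_append (l m : List (Fin 2)) : word K (l ++ m) = word K l * word K m := by
  simp [word, MonoidAlgebra.single_mul_single]

lemma delta_word (l : List (Fin 2)) : delta K (word K l) = brList K l := by
  show Finsupp.linearCombination K (fun w : FreeMonoid (Fin 2) => brList K w.toList)
      (Finsupp.single (FreeMonoid.ofList l) (1 : K)) = brList K l
  rw [Finsupp.linearCombination_single, one_smul, FreeMonoid.toList_ofList]

lemma dynkin_word (l : List (Fin 2)) :
    dynkin K (word K l) = ((l.length : K))⁻¹ • brList K l := by
  show Finsupp.linearCombination K
      (fun w : FreeMonoid (Fin 2) => ((w.toList.length : K))⁻¹ • brList K w.toList)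
      (Finsupp.single (FreeMonoid.ofList l) (1 : K)) = ((l.length : K))⁻¹ • brList K l
  rw [Finsupp.linearCombination_single, one_smul, FreeMonoid.toList_ofList]

lemma rho_letter (a : Fin 2) :
    rho K (word K [a]) = LieAlgebra.ad K (T K) (word K [a]) := by
  have : word K [a] = MonoidAlgebra.single (FreeMonoid.of a) (1 : K) := rfl
  rw [this, rho, MonoidAlgebra.lift_single, one_smul, FreeMonoid.lift_eval_of]
  rfl

lemma brList_cons (a : Fin 2) (t : List (Fin 2)) (h : t ≠ []) :
    brList K (a :: t) = word K [a] * brList K t - brList K t * word K [a] := by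
  cases t with
  | nil => exact absurd rfl h
  | cons b t' => rfl

lemma rho_brList (l : List (Fin 2)) :
    rho K (brList K l) = LieAlgebra.ad K (T K) (brList K l) := by
  induction l with
  | nil => simp [brList]
  | cons a t ih =>
    cases t with
    | nil => exact rho_letter K a
    | cons b t' =>
      rw [brList_cons K a (b :: t') (by simp)]
      have h1 : rho K (word K [a] * brList K (b :: t') - brList K (b :: t') * word K [a])
          = rho K (word K [a]) * rho K (brList K (b :: t'))
            - rho K (brList K (b :: t')) * rho K (word K [a]) := by
        simp [map_sub, map_mul]
      rw [h1, rho_letter, ih]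
      have := (LieAlgebra.ad K (T K)).map_lie (word K [a]) (brList K (b :: t'))
      simp only [Ring.lie_def] at this
      exact this.symm

/-- The span of the nonempty words. -/
def Nsub : Submodule K (T K) :=
  Submodule.span K { t | ∃ m : List (Fin 2), m ≠ [] ∧ t = word K m }

lemma word_mem_Nsub (m : List (Fin 2)) (h : m ≠ []) : word K m ∈ Nsub K :=
  Submodule.subset_span ⟨m, h, rfl⟩

lemma mul_word_mem_left (a : Fin 2) {t : T K} (ht : t ∈ Nsub K) :
    word K [a] * t ∈ Nsub K := by
  induction ht using Submodule.span_induction with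
  | mem u hu =>
    obtain ⟨m, hm, rfl⟩ := hu
    rw [← word_append]
    exact word_mem_Nsub K _ (by simp)
  | zero => simp
  | add u v _ _ hu hv => rw [mul_add]; exact add_mem hu hv
  | smul c u _ hu => rw [mul_smul_comm]; exact Submodule.smul_mem _ _ hu

lemma mul_word_mem_right (a : Fin 2) {t : T K} (ht : t ∈ Nsub K) :
    t * word K [a] ∈ Nsub K := by
  induction ht using Submodule.span_induction with
  | mem u hu =>
    obtain ⟨m, hm, rfl⟩ := hu
    rw [← word_append]
    exact word_mem_Nsub K _ (by simp [hm])
  | zero => simp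
  | add u v _ _ hu hv => rw [add_mul]; exact add_mem hu hv
  | smul c u _ hu => rw [smul_mul_assoc]; exact Submodule.smul_mem _ _ hu

lemma brList_mem_Nsub (l : List (Fin 2)) (h : l ≠ []) : brList K l ∈ Nsub K := by
  induction l with
  | nil => exact absurd rfl h
  | cons a t ih =>
    cases t with
    | nil => exact word_mem_Nsub K [a] (by simp)
    | cons b t' =>
      rw [brList_cons K a (b :: t') (by simp)]
      exact sub_mem (mul_word_mem_left K a (ih (by simp)))
        (mul_word_mem_right K a (ih (by simp)))

/-- Key identity on words: `δ(word (l ++ m)) = ρ(word l) (δ(word m))` for `m` nonempty. -/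
lemma delta_word_append (l m : List (Fin 2)) (hm : m ≠ []) :
    delta K (word K (l ++ m)) = rho K (word K l) (delta K (word K m)) := by
  induction l with
  | nil => simp [word_nil]
  | cons a l' ih =>
    have h1 : (a :: l') ++ m = a :: (l' ++ m) := rfl
    rw [h1, delta_word, brList_cons K a (l' ++ m) (by simp [hm]),
      show (a :: l') = [a] ++ l' from rfl, word_append, map_mul]
    have h2 : word K [a] * brList K (l' ++ m) - brList K (l' ++ m) * word K [a]
        = LieAlgebra.ad K (T K) (word K [a]) (brList K (l' ++ m)) := by
      simp [LieAlgebra.ad_apply, Ring.lie_def]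
    rw [h2, ← rho_letter, ← delta_word K (l' ++ m), ih]
    rfl

/-- `δ(u * word m) = ρ(u)(δ(word m))` for any `u` and nonempty word `m`. -/
lemma delta_mul_word (m : List (Fin 2)) (hm : m ≠ []) (u : T K) :
    delta K (u * word K m) = rho K u (delta K (word K m)) := by
  induction u using MonoidAlgebra.induction_linear with
  | zero => simp
  | add f g hf hg => rw [add_mul, map_add, hf, hg, map_add, LinearMap.add_apply]
  | single a c =>
    rw [single_eq_smul_word, smul_mul_assoc, map_smul, ← word_append,
      delta_word_append K _ m hm, map_smul, LinearMap.smul_apply]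

/-- `δ(u * t) = ρ(u)(δ(t))` for `t` in the span of nonempty words. -/
lemma delta_mul (u : T K) {t : T K} (ht : t ∈ Nsub K) :
    delta K (u * t) = rho K u (delta K t) := by
  induction ht using Submodule.span_induction with
  | mem v hv =>
    obtain ⟨m, hm, rfl⟩ := hv
    exact delta_mul_word K m hm u
  | zero => simp
  | add v w _ _ hv hw => rw [mul_add, map_add, map_add, hv, hw, map_add]
  | smul c v _ hv => rw [mul_smul_comm, map_smul, hv, map_smul, map_smul]

/-- Dynkin–Specht–Wever (for right-nested brackets): `δ(brList l) = |l| • brList l`. -/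
lemma delta_brList (l : List (Fin 2)) :
    delta K (brList K l) = (l.length : K) • brList K l := by
  induction l with
  | nil => simp [brList]
  | cons a t ih =>
    cases t with
    | nil => simp [brList, delta_word]
    | cons b t' =>
      set t := b :: t' with ht
      have htne : t ≠ [] := by simp [ht]
      rw [brList_cons K a t htne, map_sub]
      have h1 : delta K (word K [a] * brList K t)
          = rho K (word K [a]) (delta K (brList K t)) :=
        delta_mul K _ (brList_mem_Nsub K t htne)
      have h2 : delta K (brList K t * word K [a])
          = rho K (brList K t) (delta K (word K [a])) :=
        delta_mul K _ (word_mem_Nsub K [a] (by simp))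
      rw [h1, h2, ih, rho_letter, rho_brList, delta_word]
      simp only [LieAlgebra.ad_apply, Ring.lie_def, map_smul]
      have hlen : (((a :: t).length : ℕ) : K) = (t.length : K) + 1 := by
        rw [List.length_cons]; push_cast; ring
      rw [show brList K [a] = word K [a] from rfl, hlen]
      module

lemma word_mem_homog (l : List (Fin 2)) : word K l ∈ homog K l.length :=
  Submodule.subset_span ⟨l, rfl, rfl⟩

lemma mul_word_mem_homog_left (a : Fin 2) {n : ℕ} {t : T K} (ht : t ∈ homog K n) :
    word K [a] * t ∈ homog K (n + 1) := by
  induction ht using Submodule.span_induction with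
  | mem u hu =>
    obtain ⟨m, hm, rfl⟩ := hu
    rw [← word_append]
    exact Submodule.subset_span ⟨a :: m, by simp [hm], rfl⟩
  | zero => simp
  | add u v _ _ hu hv => rw [mul_add]; exact add_mem hu hv
  | smul c u _ hu => rw [mul_smul_comm]; exact Submodule.smul_mem _ _ hu

lemma mul_word_mem_homog_right (a : Fin 2) {n : ℕ} {t : T K} (ht : t ∈ homog K n) :
    t * word K [a] ∈ homog K (n + 1) := by
  induction ht using Submodule.span_induction with
  | mem u hu =>
    obtain ⟨m, hm, rfl⟩ := hu
    rw [← word_append]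
    exact Submodule.subset_span ⟨m ++ [a], by simp [hm], rfl⟩
  | zero => simp
  | add u v _ _ hu hv => rw [add_mul]; exact add_mem hu hv
  | smul c u _ hu => rw [smul_mul_assoc]; exact Submodule.smul_mem _ _ hu

lemma brList_mem_homog (l : List (Fin 2)) : brList K l ∈ homog K l.length := by
  induction l with
  | nil => simp [brList]
  | cons a t ih =>
    cases t with
    | nil =>
      exact word_mem_homog K [a]
    | cons b t' =>
      rw [brList_cons K a (b :: t') (by simp)]
      exact sub_mem (mul_word_mem_homog_left K a ih) (mul_word_mem_homog_right K a ih)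

/-- On degree-`n` homogeneous elements, `γ = n⁻¹ • δ`. -/
lemma dynkin_eq_on_homog {n : ℕ} {t : T K} (ht : t ∈ homog K n) :
    dynkin K t = (n : K)⁻¹ • delta K t := by
  induction ht using Submodule.span_induction with
  | mem u hu =>
    obtain ⟨m, hm, rfl⟩ := hu
    rw [dynkin_word, delta_word, hm]
  | zero => simp
  | add u v _ _ hu hv => rw [map_add, map_add, hu, hv, smul_add]
  | smul c u _ hu => rw [map_smul, map_smul, hu, smul_comm]

/-- `γ` fixes the right-nested brackets of nonempty words. -/
lemma dynkin_brList (l : List (Fin 2)) (h : l ≠ []) :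
    dynkin K (brList K l) = brList K l := by
  rw [dynkin_eq_on_homog K (brList_mem_homog K l), delta_brList, smul_smul,
    inv_mul_cancel₀, one_smul]
  exact_mod_cast Nat.cast_ne_zero.mpr (by simpa using h)


/-- The Dynkin map is idempotent: `γ(γ(p)) = γ(p)` for every `p ∈ T`. -/
theorem stmt1 (p : T K) : dynkin K (dynkin K p) = dynkin K p := by
  induction p using MonoidAlgebra.induction_linear with
  | zero => simp
  | add f g hf hg => rw [map_add, map_add, hf, hg]
  | single w c =>
    rw [single_eq_smul_word, map_smul, map_smul, dynkin_word]
    by_cases hl : w.toList = []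
    · rw [hl]
      simp [brList]
    · rw [map_smul, dynkin_brList K _ hl]


end
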